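/- Let W : Fin n_o → Fin n_i → Fin k_h → Fin k_w → ℝ be a real 4-dimensional tensor, and for each input channel i let M_i be the n_o × (k_h·k_w) real matrix with entries M_i o (h, w) = W o i h w, with singular values σ_{i,1} ≥ σ_{i,2} ≥ … ≥ σ_{i,r_i} > 0 where r_i = rank M_i. Then for every natural number T, there exist families P : Fin T → Fin n_o → Fin n_i → ℝ and D : Fin T → Fin n_i → Fin k_h → Fin k_w → ℝ such that the squared Frobenius reconstruction error satisfies ∑_{o,i,h,w} (W o i h w − ∑_{k : Fin T} P k o i * D k i h w)^2 = ∑_{i} ∑_{k > T, k ≤ r_i} σ_{i,k}^2. (Truncating the decoupling of each slice to its top-T singular components gives a T-term depthwise separable approximation whose error is the total tail singular-value energy.) -/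

import Mathlib

set_option maxHeartbeats 1000000


/-- Truncating the decoupling of each matricized slice of `W` to its top-`T`
singular components gives a `T`-term DW+PW depthwise separable approximation
whose squared Frobenius reconstruction error is the total tail
singular-value energy.

The singular values of each slice `M i` (in decreasing order) are encoded by
an SVD: positive decreasing `σ i` together with orthonormal families
`u i`, `v i` such that `M i = ∑ k, σ i k • (u i k) ⬝ (v i k)ᵀ`. -/
theorem dw_pw_truncated_svd_error
    (n_o n_i k_h k_w : ℕ)
    (W : Fin n_o → Fin n_i → Fin k_h → Fin k_w → ℝ)
    (M : Fin n_i → Matrix (Fin n_o) (Fin k_h × Fin k_w) ℝ)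
    (hM : ∀ (i : Fin n_i) (o : Fin n_o) (h : Fin k_h) (w : Fin k_w),
      M i o (h, w) = W o i h w)
    (σ : ∀ i : Fin n_i, Fin (M i).rank → ℝ)
    (u : ∀ i : Fin n_i, Fin (M i).rank → Fin n_o → ℝ)
    (v : ∀ i : Fin n_i, Fin (M i).rank → Fin k_h × Fin k_w → ℝ)
    (hσpos : ∀ i k, 0 < σ i k)
    (hσdec : ∀ (i : Fin n_i) (k k' : Fin (M i).rank), k ≤ k' → σ i k' ≤ σ i k)
    (hu : ∀ (i : Fin n_i) (k k' : Fin (M i).rank),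
      (∑ o : Fin n_o, u i k o * u i k' o) = if k = k' then (1 : ℝ) else 0)
    (hv : ∀ (i : Fin n_i) (k k' : Fin (M i).rank),
      (∑ p : Fin k_h × Fin k_w, v i k p * v i k' p) = if k = k' then (1 : ℝ) else 0)
    (hSVD : ∀ (i : Fin n_i) (o : Fin n_o) (p : Fin k_h × Fin k_w),
      M i o p = ∑ k : Fin (M i).rank, σ i k * u i k o * v i k p)
    (T : ℕ) :
    ∃ (P : Fin T → Fin n_o → Fin n_i → ℝ)
      (D : Fin T → Fin n_i → Fin k_h → Fin k_w → ℝ),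
      (∑ o : Fin n_o, ∑ i : Fin n_i, ∑ h : Fin k_h, ∑ w : Fin k_w,
          (W o i h w - ∑ k : Fin T, P k o i * D k i h w) ^ 2)
        = ∑ i : Fin n_i,
            ∑ k ∈ Finset.univ.filter (fun k : Fin (M i).rank => T ≤ (k : ℕ)),
              (σ i k) ^ 2 := by
  classical
  set P : Fin T → Fin n_o → Fin n_i → ℝ := fun k o i =>
    if h : (k : ℕ) < (M i).rank then σ i ⟨(k : ℕ), h⟩ * u i ⟨(k : ℕ), h⟩ o else 0 with hP
  set D : Fin T → Fin n_i → Fin k_h → Fin k_w → ℝ := fun k i a b =>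
    if h : (k : ℕ) < (M i).rank then v i ⟨(k : ℕ), h⟩ (a, b) else 0 with hD
  refine ⟨P, D, ?_⟩
  have hdiff : ∀ (o : Fin n_o) (i : Fin n_i) (a : Fin k_h) (b : Fin k_w),
      W o i a b - ∑ k : Fin T, P k o i * D k i a b
        = ∑ k ∈ Finset.univ.filter (fun k : Fin (M i).rank => T ≤ (k : ℕ)),
            σ i k * u i k o * v i k (a, b) := by
    intro o i a b
    set r := (M i).rank with hr
    set f : ℕ → ℝ := fun n =>
      if h : n < r then
        (if n < T then σ i ⟨n, h⟩ * u i ⟨n, h⟩ o * v i ⟨n, h⟩ (a, b) else 0)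
      else 0 with hf
    have hW : W o i a b = ∑ k : Fin r, σ i k * u i k o * v i k (a, b) := by
      rw [← hM i o a b, hSVD i o (a, b)]
    have hpart : (∑ k : Fin T, P k o i * D k i a b)
        = ∑ k ∈ Finset.univ.filter (fun k : Fin r => (k : ℕ) < T),
            σ i k * u i k o * v i k (a, b) := by
      have h1 : (∑ k : Fin T, P k o i * D k i a b) = ∑ n ∈ Finset.range T, f n := by
        rw [← Fin.sum_univ_eq_sum_range f T]
        refine Finset.sum_congr rfl fun k _ => ?_
        by_cases h : (k : ℕ) < r
        · simp [hP, hD, hf, h, (show (k : ℕ) < (M i).rank from h), k.isLt, mul_assoc]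
        · simp [hP, hD, hf, h, (show ¬ (k : ℕ) < (M i).rank from h)]
      have h2 : (∑ k ∈ Finset.univ.filter (fun k : Fin r => (k : ℕ) < T),
            σ i k * u i k o * v i k (a, b)) = ∑ n ∈ Finset.range r, f n := by
        rw [← Fin.sum_univ_eq_sum_range f r, Finset.sum_filter]
        refine Finset.sum_congr rfl fun k _ => ?_
        simp [hf, k.isLt]
      have h3 : ∑ n ∈ Finset.range T, f n = ∑ n ∈ Finset.range (min T r), f n := by
        refine (Finset.sum_subset (Finset.range_subset_range.2 (min_le_left _ _)) ?_).symm
        intro x hx hx'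
        simp only [Finset.mem_range] at hx hx'
        have hxr : ¬ x < r := by omega
        simp [hf, hxr]
      have h4 : ∑ n ∈ Finset.range r, f n = ∑ n ∈ Finset.range (min T r), f n := by
        refine (Finset.sum_subset (Finset.range_subset_range.2 (min_le_right _ _)) ?_).symm
        intro x hx hx'
        simp only [Finset.mem_range] at hx hx'
        have hxT : ¬ x < T := by omega
        by_cases hxr : x < r <;> simp [hf, hxr, hxT]
      rw [h1, h2, h3, h4]
    have hsplit := Finset.sum_filter_add_sum_filter_not (Finset.univ : Finset (Fin r))
      (fun k => (k : ℕ) < T) (fun k => σ i k * u i k o * v i k (a, b))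
    have hfilt : Finset.univ.filter (fun k : Fin r => ¬ (k : ℕ) < T)
        = Finset.univ.filter (fun k : Fin r => T ≤ (k : ℕ)) := by
      ext k; simp [Nat.not_lt]
    rw [hW, hpart, ← hsplit, hfilt]
    ring
  calc (∑ o : Fin n_o, ∑ i : Fin n_i, ∑ a : Fin k_h, ∑ b : Fin k_w,
          (W o i a b - ∑ k : Fin T, P k o i * D k i a b) ^ 2)
      = ∑ o : Fin n_o, ∑ i : Fin n_i, ∑ a : Fin k_h, ∑ b : Fin k_w,
          (∑ k ∈ Finset.univ.filter (fun k : Fin (M i).rank => T ≤ (k : ℕ)),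
            σ i k * u i k o * v i k (a, b)) ^ 2 := by
        refine Finset.sum_congr rfl fun o _ => Finset.sum_congr rfl fun i _ =>
          Finset.sum_congr rfl fun a _ => Finset.sum_congr rfl fun b _ => ?_
        rw [hdiff o i a b]
    _ = ∑ i : Fin n_i, ∑ o : Fin n_o, ∑ a : Fin k_h, ∑ b : Fin k_w,
          (∑ k ∈ Finset.univ.filter (fun k : Fin (M i).rank => T ≤ (k : ℕ)),
            σ i k * u i k o * v i k (a, b)) ^ 2 := Finset.sum_comm
    _ = ∑ i : Fin n_i,
          ∑ k ∈ Finset.univ.filter (fun k : Fin (M i).rank => T ≤ (k : ℕ)),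
            (σ i k) ^ 2 := by
        refine Finset.sum_congr rfl fun i _ => ?_
        set S := Finset.univ.filter (fun k : Fin (M i).rank => T ≤ (k : ℕ)) with hS
        have hprod : ∀ o : Fin n_o,
            (∑ a : Fin k_h, ∑ b : Fin k_w,
              (∑ k ∈ S, σ i k * u i k o * v i k (a, b)) ^ 2)
            = ∑ p : Fin k_h × Fin k_w, (∑ k ∈ S, σ i k * u i k o * v i k p) ^ 2 :=
          fun o => (Fintype.sum_prod_type
            (fun p : Fin k_h × Fin k_w => (∑ k ∈ S, σ i k * u i k o * v i k p) ^ 2)).symm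
        calc (∑ o : Fin n_o, ∑ a : Fin k_h, ∑ b : Fin k_w,
                (∑ k ∈ S, σ i k * u i k o * v i k (a, b)) ^ 2)
            = ∑ o : Fin n_o, ∑ p : Fin k_h × Fin k_w,
                (∑ k ∈ S, σ i k * u i k o * v i k p) ^ 2 :=
              Finset.sum_congr rfl fun o _ => hprod o
          _ = ∑ o : Fin n_o, ∑ p : Fin k_h × Fin k_w, ∑ k ∈ S, ∑ k' ∈ S,
                (σ i k * u i k o * v i k p) * (σ i k' * u i k' o * v i k' p) := by
              refine Finset.sum_congr rfl fun o _ => Finset.sum_congr rfl fun p _ => ?_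
              rw [sq, Finset.sum_mul_sum]
          _ = ∑ o : Fin n_o, ∑ k ∈ S, ∑ p : Fin k_h × Fin k_w, ∑ k' ∈ S,
                (σ i k * u i k o * v i k p) * (σ i k' * u i k' o * v i k' p) :=
              Finset.sum_congr rfl fun o _ => Finset.sum_comm
          _ = ∑ k ∈ S, ∑ o : Fin n_o, ∑ p : Fin k_h × Fin k_w, ∑ k' ∈ S,
                (σ i k * u i k o * v i k p) * (σ i k' * u i k' o * v i k' p) :=
              Finset.sum_comm
          _ = ∑ k ∈ S, ∑ o : Fin n_o, ∑ k' ∈ S, ∑ p : Fin k_h × Fin k_w,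
                (σ i k * u i k o * v i k p) * (σ i k' * u i k' o * v i k' p) :=
              Finset.sum_congr rfl fun k _ => Finset.sum_congr rfl fun o _ =>
                Finset.sum_comm
          _ = ∑ k ∈ S, ∑ k' ∈ S, ∑ o : Fin n_o, ∑ p : Fin k_h × Fin k_w,
                (σ i k * u i k o * v i k p) * (σ i k' * u i k' o * v i k' p) :=
              Finset.sum_congr rfl fun k _ => Finset.sum_comm
          _ = ∑ k ∈ S, ∑ k' ∈ S, (σ i k * σ i k') *
                ((∑ o : Fin n_o, u i k o * u i k' o) *
                 (∑ p : Fin k_h × Fin k_w, v i k p * v i k' p)) := by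
              refine Finset.sum_congr rfl fun k _ => Finset.sum_congr rfl fun k' _ => ?_
              rw [Finset.sum_mul_sum, Finset.mul_sum]
              refine Finset.sum_congr rfl fun o _ => ?_
              rw [Finset.mul_sum]
              exact Finset.sum_congr rfl fun p _ => by ring
          _ = ∑ k ∈ S, (σ i k) ^ 2 := by
              refine Finset.sum_congr rfl fun k hk => ?_
              rw [Finset.sum_congr rfl (fun k' _ => by rw [hu i k k', hv i k k'])]
              have hcoll : ∀ k' ∈ S,
                  σ i k * σ i k' * ((if k = k' then (1:ℝ) else 0) *
                    (if k = k' then (1:ℝ) else 0))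
                  = if k = k' then σ i k ^ 2 else 0 := by
                intro k' _
                split_ifs with h <;> simp [h, sq]
              rw [Finset.sum_congr rfl hcoll, Finset.sum_ite_eq S k (fun _ => σ i k ^ 2)]
              simp [hk]
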